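/- Let f ∈ F[x] have t ≤ T nonzero terms with degree less than D, and suppose t ≥ 2. For a prime p, say p 'separates' an ordered pair of distinct exponents (dᵢ, dⱼ) of f if dᵢ ≢ dⱼ (mod p). Each nonzero integer dᵢ − dⱼ with |dᵢ − dⱼ| < D has at most log₂ D distinct prime divisors. Consequently, among any N ≥ 4·⌈(T−1)·log₂ D⌉ distinct primes, at least one prime p has the property that at least ⌈t/2⌉ terms of f are not collisions modulo p. -/

import Mathlib

open scoped Classical
open Polynomial

/-- exponent differences have few prime divisors, hence among
enough distinct primes some prime leaves at least half the terms of f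
non-colliding. -/
theorem stmt14 (F : Type*) [Field F] (T D t : ℕ) (f : Polynomial F)
    (ht : f.support.card = t) (hT : t ≤ T) (ht2 : 2 ≤ t) (hdeg : f.natDegree < D)
    (P : Finset ℕ) (hP : ∀ p ∈ P, p.Prime)
    (hN : 4 * ⌈((T : ℝ) - 1) * Real.logb 2 D⌉₊ ≤ P.card) :
    (∀ d ∈ f.support, ∀ d' ∈ f.support, d ≠ d' →
      ((((d : ℤ) - (d' : ℤ)).natAbs.primeFactors.card : ℝ) ≤ Real.logb 2 D)) ∧
    ∃ p ∈ P, (t + 1) / 2 ≤ (f.support.filter fun d =>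
        ∀ d' ∈ f.support, d' ≠ d → d' % p ≠ d % p).card := by
  have hsupp_lt : ∀ d ∈ f.support, d < D := fun d hd =>
    lt_of_le_of_lt (Polynomial.le_natDegree_of_mem_supp d hd) hdeg
  -- D ≥ 2
  have hD2 : 2 ≤ D := by
    have h1 : 1 < f.support.card := by omega
    obtain ⟨a, ha, b, hb, hab⟩ := Finset.one_lt_card.mp h1
    have := hsupp_lt a ha
    have := hsupp_lt b hb
    omega
  have hL1 : (1 : ℝ) ≤ Real.logb 2 D := by
    have : Real.logb 2 2 ≤ Real.logb 2 D := by
      apply Real.logb_le_logb_of_le (by norm_num) (by norm_num)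
      exact_mod_cast hD2
    simpa [Real.logb_self_eq_one (by norm_num : (1:ℝ) < 2)] using this
  -- Part 1
  have part1 : ∀ d ∈ f.support, ∀ d' ∈ f.support, d ≠ d' →
      ((((d : ℤ) - (d' : ℤ)).natAbs.primeFactors.card : ℝ) ≤ Real.logb 2 D) := by
    intro d hd d' hd' hne
    set m := ((d : ℤ) - (d' : ℤ)).natAbs with hm
    have hd1 := hsupp_lt d hd
    have hd2 := hsupp_lt d' hd'
    have hm0 : m ≠ 0 := by
      simp only [hm]
      omega
    have hmD : m < D := by omega
    have h2 : (2 : ℕ) ^ m.primeFactors.card ≤ m := by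
      calc (2:ℕ) ^ m.primeFactors.card ≤ ∏ p ∈ m.primeFactors, p :=
            Finset.pow_card_le_prod _ _ _
              (fun p hp => (Nat.prime_of_mem_primeFactors hp).two_le)
        _ ≤ m := Nat.le_of_dvd (Nat.pos_of_ne_zero hm0) (Nat.prod_primeFactors_dvd m)
    have h2R : (2 : ℝ) ^ m.primeFactors.card ≤ (D : ℝ) := by
      calc (2:ℝ) ^ m.primeFactors.card ≤ (m : ℝ) := by exact_mod_cast h2
        _ ≤ (D : ℝ) := by exact_mod_cast hmD.le
    calc (m.primeFactors.card : ℝ)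
        = Real.logb 2 ((2:ℝ) ^ m.primeFactors.card) := by
          rw [Real.logb_pow, Real.logb_self_eq_one (by norm_num : (1:ℝ) < 2), mul_one]
      _ ≤ Real.logb 2 D := Real.logb_le_logb_of_le (by norm_num) (by positivity) h2R
  refine ⟨part1, ?_⟩
  by_contra hcon
  push_neg at hcon
  set L := Real.logb 2 D with hLdef
  -- the bad (colliding) set at each prime
  set B : ℕ → Finset ℕ := fun p =>
    f.support.filter fun d => ¬ ∀ d' ∈ f.support, d' ≠ d → d' % p ≠ d % p with hBdef
  have hBcard : ∀ p ∈ P, t + 1 ≤ 2 * (B p).card := by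
    intro p hp
    have h1 := Finset.card_filter_add_card_filter_not
      (s := f.support) (p := fun d => ∀ d' ∈ f.support, d' ≠ d → d' % p ≠ d % p)
    have h2 := hcon p hp
    simp only [ht] at h1
    simp only [hBdef]
    omega
  -- injection from B p into colliding ordered pairs
  have hBpair : ∀ p ∈ P, (B p).card ≤
      (f.support.offDiag.filter fun q => q.1 % p = q.2 % p).card := by
    intro p hp
    apply Finset.card_le_card_of_injOn
      (fun d => (if h : ∃ d' ∈ f.support, d' ≠ d ∧ d' % p = d % p
        then (h.choose, d) else (d, d)))
    · intro d hd
      simp only [hBdef, Finset.mem_coe, Finset.mem_filter] at hd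
      obtain ⟨hds, hbad⟩ := hd
      push_neg at hbad
      obtain ⟨d', hd's, hne, hmod⟩ := hbad
      have hex : ∃ d' ∈ f.support, d' ≠ d ∧ d' % p = d % p := ⟨d', hd's, hne, hmod⟩
      beta_reduce
      rw [Finset.mem_coe, dif_pos hex]
      obtain ⟨hc1, hc2, hc3⟩ := hex.choose_spec
      exact Finset.mem_filter.mpr ⟨Finset.mem_offDiag.mpr ⟨hc1, hds, hc2⟩, hc3⟩
    · intro a _ b _ hab
      have hsnd : ∀ c : ℕ, ((if h : ∃ d' ∈ f.support, d' ≠ c ∧ d' % p = c % p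
          then (h.choose, c) else (c, c)) : ℕ × ℕ).2 = c := by
        intro c; split <;> rfl
      calc a = _ := (hsnd a).symm
        _ = _ := congrArg Prod.snd hab
        _ = b := hsnd b
  -- swap the double sum
  have hswap : ∑ p ∈ P, (f.support.offDiag.filter fun q => q.1 % p = q.2 % p).card
      = ∑ q ∈ f.support.offDiag, (P.filter fun p => q.1 % p = q.2 % p).card := by
    simp_rw [Finset.card_filter]
    rw [Finset.sum_comm]
  -- each pair is separated by few primes
  have hpair : ∀ q ∈ f.support.offDiag,
      ((P.filter fun p => q.1 % p = q.2 % p).card : ℝ) ≤ L := by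
    intro q hq
    obtain ⟨hq1, hq2, hqne⟩ := Finset.mem_offDiag.mp hq
    refine le_trans ?_ (part1 q.1 hq1 q.2 hq2 hqne)
    have hsub : (P.filter fun p => q.1 % p = q.2 % p)
        ⊆ ((q.1 : ℤ) - (q.2 : ℤ)).natAbs.primeFactors := by
      intro p hp
      obtain ⟨hpP, hmod⟩ := Finset.mem_filter.mp hp
      have hprime := hP p hpP
      have hdvd : (p : ℤ) ∣ (q.2 : ℤ) - (q.1 : ℤ) := Nat.modEq_iff_dvd.mp hmod
      have hdvd' : p ∣ ((q.1 : ℤ) - (q.2 : ℤ)).natAbs := by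
        have := Int.natAbs_dvd_natAbs.mpr (dvd_neg.mpr hdvd)
        simpa [neg_sub] using this
      refine Nat.mem_primeFactors.mpr ⟨hprime, hdvd', ?_⟩
      omega
    exact_mod_cast Finset.card_le_card hsub
  -- combine everything over ℝ
  set N := P.card with hNdef
  have hA : (N : ℝ) * (t + 1) ≤ 2 * ∑ q ∈ f.support.offDiag,
      ((P.filter fun p => q.1 % p = q.2 % p).card : ℕ) := by
    have h1 : N * (t + 1) ≤ ∑ p ∈ P, 2 * (B p).card := by
      calc N * (t + 1) = ∑ _p ∈ P, (t + 1) := by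
            rw [Finset.sum_const, smul_eq_mul]
        _ ≤ ∑ p ∈ P, 2 * (B p).card := Finset.sum_le_sum hBcard
    have h2 : ∑ p ∈ P, 2 * (B p).card ≤ 2 * ∑ q ∈ f.support.offDiag,
        (P.filter fun p => q.1 % p = q.2 % p).card := by
      rw [← hswap, ← Finset.mul_sum]
      exact Nat.mul_le_mul_left 2 (Finset.sum_le_sum hBpair)
    exact_mod_cast le_trans h1 h2
  have hS : (∑ q ∈ f.support.offDiag,
      ((P.filter fun p => q.1 % p = q.2 % p).card : ℝ)) ≤ ((t : ℝ) * t - t) * L := by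
    calc (∑ q ∈ f.support.offDiag, ((P.filter fun p => q.1 % p = q.2 % p).card : ℝ))
        ≤ ∑ _q ∈ f.support.offDiag, L := Finset.sum_le_sum hpair
      _ = (f.support.offDiag.card : ℝ) * L := by rw [Finset.sum_const, nsmul_eq_mul]
      _ = ((t : ℝ) * t - t) * L := by
          rw [Finset.offDiag_card, ht]
          congr 1
          have : t ≤ t * t := Nat.le_mul_of_pos_left t (by omega)
          push_cast [this]
          ring
  have hN' : 4 * (((T : ℝ) - 1) * L) ≤ (N : ℝ) := by
    calc 4 * (((T : ℝ) - 1) * L) ≤ 4 * (⌈((T : ℝ) - 1) * L⌉₊ : ℝ) := by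
          have := Nat.le_ceil (((T : ℝ) - 1) * L)
          linarith
      _ ≤ (N : ℝ) := by exact_mod_cast hN
  have hAA : (N : ℝ) * (t + 1) ≤ 2 * (((t : ℝ) * t - t) * L) := by
    have := hA
    push_cast at this
    nlinarith [hS]
  have htT : (t : ℝ) ≤ (T : ℝ) := by exact_mod_cast hT
  have ht2' : (2 : ℝ) ≤ (t : ℝ) := by exact_mod_cast ht2
  set M := ((T : ℝ) - 1) * L with hMdef
  have hM1 : (1 : ℝ) ≤ M := by
    have h1 : (1 : ℝ) ≤ (T : ℝ) - 1 := by linarith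
    nlinarith
  have hstep : ((t : ℝ) * t - t) * L ≤ (t : ℝ) * M := by
    have h : (t : ℝ) * t - t ≤ (t : ℝ) * ((T : ℝ) - 1) := by nlinarith
    have hL0 : (0 : ℝ) ≤ L := by linarith
    calc ((t : ℝ) * t - t) * L ≤ ((t : ℝ) * ((T : ℝ) - 1)) * L :=
          mul_le_mul_of_nonneg_right h hL0
      _ = (t : ℝ) * M := by rw [hMdef]; ring
  have h1 : 4 * M * ((t : ℝ) + 1) ≤ (N : ℝ) * ((t : ℝ) + 1) := by
    have := mul_le_mul_of_nonneg_right hN' (by positivity : (0:ℝ) ≤ (t:ℝ) + 1)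
    linarith
  have hchain : 4 * M * ((t : ℝ) + 1) ≤ 2 * ((t : ℝ) * M) := by
    calc 4 * M * ((t : ℝ) + 1) ≤ (N : ℝ) * ((t : ℝ) + 1) := h1
      _ ≤ 2 * (((t : ℝ) * t - t) * L) := hAA
      _ ≤ 2 * ((t : ℝ) * M) := by linarith
  nlinarith [hchain, hM1, ht2',
    mul_pos (by linarith : (0:ℝ) < M) (by linarith : (0:ℝ) < (t:ℝ) + 2)]
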